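/- (Euclidean distance estimation is unbiased) Fix reals L < U, t > 0 and ε > 0, and set μ = U − L + 2t. Let x_1, x_2 ∈ [L, U] with d_E = |x_1 − x_2| ≤ 2t, let d_H be the Hamming distance between the DPBV encodings of x_1 and x_2, and define the estimator d̂_E = (μ/(2s)) · ((e^ε + 1)/(e^ε − 1))^2 · d_H − μ e^ε/(e^ε − 1)^2. Then E[d̂_E] = d_E. -/

import Mathlib

open MeasureTheory ProbabilityTheory Real

/-- The BV hash: `h_{r,t}(x) = 1` if `x ∈ [r - t, r + t]` and `0` otherwise. -/
noncomputable def bvHash (t r x : ℝ) : ℕ := if x ∈ Set.Icc (r - t) (r + t) then 1 else 0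

/-- The uniform probability measure on the interval `[a, b]`. -/
noncomputable def uniformIcc (a b : ℝ) : Measure ℝ :=
  (ENNReal.ofReal (b - a))⁻¹ • (volume.restrict (Set.Icc a b))

/-- A DPBV bit: the BV hash bit `bvHash t r x` XOR-ed with the flip indicator `flip ∈ {0,1}`. -/
noncomputable def dpbvBit (t r x flip : ℝ) : ℕ :=
  if flip = 1 then 1 - bvHash t r x else bvHash t r x

/-- The (random) Hamming distance between the DPBV encodings of `x₁` (with flips `f`) and `x₂`
(with flips `g`): the number of coordinates in which they differ. -/
noncomputable def dpbvHammingDist (t : ℝ) {s : ℕ} {Ω : Type*}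
    (r f g : Fin s → Ω → ℝ) (x₁ x₂ : ℝ) (ω : Ω) : ℕ :=
  (Finset.univ.filter fun i =>
    dpbvBit t (r i ω) x₁ (f i ω) ≠ dpbvBit t (r i ω) x₂ (g i ω)).card

/-- The (random) DPBV Euclidean distance estimator
`d̂_E = (μ/(2s)) · ((e^ε + 1)/(e^ε − 1))² · d_H − μ·e^ε/(e^ε − 1)²`. -/
noncomputable def dpbvEstimator (t μ ε : ℝ) {s : ℕ} {Ω : Type*}
    (r f g : Fin s → Ω → ℝ) (x₁ x₂ : ℝ) (ω : Ω) : ℝ :=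
  μ / (2 * s) * ((exp ε + 1) / (exp ε - 1)) ^ 2 * (dpbvHammingDist t r f g x₁ x₂ ω : ℝ)
    - μ * exp ε / (exp ε - 1) ^ 2


private lemma bvHash_ne_iff (t R x₁ x₂ : ℝ) :
    bvHash t R x₁ ≠ bvHash t R x₂ ↔
      R ∈ symmDiff (Set.Icc (x₁ - t) (x₁ + t)) (Set.Icc (x₂ - t) (x₂ + t)) := by
  have h1 : x₁ ∈ Set.Icc (R - t) (R + t) ↔ R ∈ Set.Icc (x₁ - t) (x₁ + t) := by
    simp only [Set.mem_Icc]; constructor <;> rintro ⟨h, h'⟩ <;> constructor <;> linarith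
  have h2 : x₂ ∈ Set.Icc (R - t) (R + t) ↔ R ∈ Set.Icc (x₂ - t) (x₂ + t) := by
    simp only [Set.mem_Icc]; constructor <;> rintro ⟨h, h'⟩ <;> constructor <;> linarith
  rw [Set.mem_symmDiff, ← h1, ← h2]
  unfold bvHash
  split_ifs with hA hB hB <;> simp [hA, hB]

private lemma dpbvBit_ne_iff (t R x₁ x₂ F G : ℝ) (hF : F = 0 ∨ F = 1) (hG : G = 0 ∨ G = 1) :
    (dpbvBit t R x₁ F ≠ dpbvBit t R x₂ G) ↔
      ((R ∈ symmDiff (Set.Icc (x₁ - t) (x₁ + t)) (Set.Icc (x₂ - t) (x₂ + t))) ↔ F = G) := by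
  rw [← bvHash_ne_iff]
  have h1 : bvHash t R x₁ = 0 ∨ bvHash t R x₁ = 1 := by unfold bvHash; split <;> simp
  have h2 : bvHash t R x₂ = 0 ∨ bvHash t R x₂ = 1 := by unfold bvHash; split <;> simp
  unfold dpbvBit
  rcases hF with hF | hF <;> rcases hG with hG | hG <;> subst hF <;> subst hG <;>
    rcases h1 with h1 | h1 <;> rcases h2 with h2 | h2 <;> simp [h1, h2]

private lemma vol_symmDiff_Icc (t a b : ℝ) (hab : a ≤ b) (h2 : b - a ≤ 2 * t) :
    volume (symmDiff (Set.Icc (a - t) (a + t)) (Set.Icc (b - t) (b + t)))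
      = ENNReal.ofReal (2 * (b - a)) := by
  have hset : symmDiff (Set.Icc (a - t) (a + t)) (Set.Icc (b - t) (b + t))
      = Set.Ico (a - t) (b - t) ∪ Set.Ioc (a + t) (b + t) := by
    ext x
    simp only [Set.mem_symmDiff, Set.mem_Icc, Set.mem_union, Set.mem_Ico, Set.mem_Ioc,
      not_and, not_le]
    constructor
    · rintro (⟨⟨u1, u2⟩, u3⟩ | ⟨⟨u1, u2⟩, u3⟩)
      · left
        refine ⟨u1, ?_⟩
        by_contra hc
        push_neg at hc
        exact absurd (u3 hc) (by push_neg; linarith)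
      · right
        refine ⟨?_, u2⟩
        by_contra hc
        push_neg at hc
        exact absurd (u3 (by linarith)) (by push_neg; exact hc)
    · rintro (⟨u1, u2⟩ | ⟨u1, u2⟩)
      · exact Or.inl ⟨⟨u1, by linarith⟩, fun hh => by linarith⟩
      · exact Or.inr ⟨⟨by linarith, u2⟩, fun hh => by linarith⟩
  rw [hset, measure_union ?_ measurableSet_Ioc, Real.volume_Ico, Real.volume_Ioc,
    ← ENNReal.ofReal_add (by linarith) (by linarith)]
  · congr 1; ring
  · rw [Set.disjoint_left]
    intro x hx hx'
    simp only [Set.mem_Ico, Set.mem_Ioc] at hx hx'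
    linarith [hx.2, hx'.1]

set_option maxHeartbeats 1600000 in
/-- (Euclidean distance estimation is unbiased) For `L < U`, `t > 0`, `ε > 0`,
`μ = U - L + 2t`, with `r 0, …, r (s-1)` i.i.d. uniform on `[L - t, U + t]`, flip indicators
`f i, g i ∈ {0,1}` each equal to `1` with probability `1/(e^ε + 1)`, all mutually independent,
and `x₁, x₂ ∈ [L, U]` with `d_E = |x₁ - x₂| ≤ 2t`, the estimator
`d̂_E = (μ/(2s)) · ((e^ε + 1)/(e^ε − 1))² · d_H − μ·e^ε/(e^ε − 1)²` satisfies
`E[d̂_E] = d_E`. -/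
theorem dpbv_estimator_unbiased
    {Ω : Type*} [MeasurableSpace Ω] (P : Measure Ω) [IsProbabilityMeasure P]
    (L U t μ ε : ℝ) (hLU : L < U) (ht : 0 < t) (hε : 0 < ε) (hμ : μ = U - L + 2 * t)
    (s : ℕ) (hs : 1 ≤ s) (r f g : Fin s → Ω → ℝ)
    (hr : ∀ i, Measurable (r i)) (hf : ∀ i, Measurable (f i)) (hg : ∀ i, Measurable (g i))
    (hrlaw : ∀ i, Measure.map (r i) P = uniformIcc (L - t) (U + t))
    (hf01 : ∀ i ω, f i ω = 0 ∨ f i ω = 1) (hg01 : ∀ i ω, g i ω = 0 ∨ g i ω = 1)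
    (hflaw : ∀ i, P {ω | f i ω = 1} = ENNReal.ofReal (1 / (exp ε + 1)))
    (hglaw : ∀ i, P {ω | g i ω = 1} = ENNReal.ofReal (1 / (exp ε + 1)))
    (hindep : iIndepFun (β := fun _ : Fin s ⊕ (Fin s ⊕ Fin s) => ℝ)
      (Sum.elim r (Sum.elim f g)) P)
    (x₁ x₂ : ℝ) (hx₁ : x₁ ∈ Set.Icc L U) (hx₂ : x₂ ∈ Set.Icc L U)
    (hd : |x₁ - x₂| ≤ 2 * t) :
    ∫ ω, dpbvEstimator t μ ε r f g x₁ x₂ ω ∂P = |x₁ - x₂| := by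
  classical
  obtain ⟨hx₁L, hx₁U⟩ := hx₁
  obtain ⟨hx₂L, hx₂U⟩ := hx₂
  have hE : (1 : ℝ) < exp ε := by
    calc (1:ℝ) = exp 0 := by simp
    _ < exp ε := exp_lt_exp.mpr hε
  set d : ℝ := |x₁ - x₂| with hd_def
  have hd0 : 0 ≤ d := abs_nonneg _
  have hdUL : d ≤ U - L := abs_le.mpr ⟨by linarith, by linarith⟩
  have hμpos : 0 < μ := by rw [hμ]; linarith
  have hdμ : 2 * d ≤ μ := by rw [hμ]; rcases le_total (U - L) (2*t) with h | h <;> linarith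
  have hpA0 : 0 ≤ 2 * d / μ := by positivity
  have hpA1 : 0 ≤ 1 - 2 * d / μ := by
    rw [sub_nonneg, div_le_one hμpos]; linarith
  -- the symmetric-difference set
  set S : Set ℝ := symmDiff (Set.Icc (x₁ - t) (x₁ + t)) (Set.Icc (x₂ - t) (x₂ + t)) with hS_def
  have hSm : MeasurableSet S := by
    rw [hS_def, Set.symmDiff_def]
    exact (measurableSet_Icc.diff measurableSet_Icc).union
      (measurableSet_Icc.diff measurableSet_Icc)
  have hSsub : S ⊆ Set.Icc (L - t) (U + t) := by
    intro x hx
    rw [hS_def, Set.mem_symmDiff] at hx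
    simp only [Set.mem_Icc] at *
    rcases hx with ⟨⟨h1, h2⟩, _⟩ | ⟨⟨h1, h2⟩, _⟩ <;> constructor <;> linarith
  have hSvol : volume S = ENNReal.ofReal (2 * d) := by
    rcases le_total x₂ x₁ with h | h
    · have hdd : d = x₁ - x₂ := abs_of_nonneg (by linarith)
      rw [hS_def, symmDiff_comm, vol_symmDiff_Icc t x₂ x₁ h (by linarith), hdd]
    · have hdd : d = x₂ - x₁ := by rw [hd_def, abs_sub_comm]; exact abs_of_nonneg (by linarith)
      rw [hS_def, vol_symmDiff_Icc t x₁ x₂ h (by linarith), hdd]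
  -- probability that r i lands in S
  have hA : ∀ i, P (r i ⁻¹' S) = ENNReal.ofReal (2 * d / μ) := by
    intro i
    have h1 : P (r i ⁻¹' S) = Measure.map (r i) P S := (Measure.map_apply (hr i) hSm).symm
    rw [h1, hrlaw i, uniformIcc, Measure.smul_apply, Measure.restrict_apply hSm,
      Set.inter_eq_self_of_subset_left hSsub, hSvol, smul_eq_mul,
      show U + t - (L - t) = μ by rw [hμ]; ring,
      ENNReal.ofReal_div_of_pos hμpos, ENNReal.div_eq_inv_mul]
  have hAc : ∀ i, P (r i ⁻¹' Sᶜ) = ENNReal.ofReal (1 - 2 * d / μ) := by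
    intro i
    rw [Set.preimage_compl, measure_compl (hSm.preimage (hr i)) (measure_ne_top _ _),
      measure_univ, hA i, ENNReal.ofReal_sub _ hpA0, ENNReal.ofReal_one]
  set a : ℝ := 1 / (exp ε + 1) with ha_def
  have ha0 : 0 < a := by positivity
  have ha1 : a < 1 := by
    rw [ha_def, div_lt_one (by linarith)]; linarith
  have ha1' : (0:ℝ) ≤ 1 - a := by linarith
  -- flip events
  have hFone : ∀ i, P (f i ⁻¹' {1}) = ENNReal.ofReal a := fun i => hflaw i
  have hGone : ∀ i, P (g i ⁻¹' {1}) = ENNReal.ofReal a := fun i => hglaw i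
  have hFzero : ∀ i, P (f i ⁻¹' {1}ᶜ) = ENNReal.ofReal (1 - a) := by
    intro i
    rw [Set.preimage_compl, measure_compl ((measurableSet_singleton 1).preimage (hf i))
      (measure_ne_top _ _), measure_univ, hFone i,
      ENNReal.ofReal_sub _ ha0.le, ENNReal.ofReal_one]
  have hGzero : ∀ i, P (g i ⁻¹' {1}ᶜ) = ENNReal.ofReal (1 - a) := by
    intro i
    rw [Set.preimage_compl, measure_compl ((measurableSet_singleton 1).preimage (hg i))
      (measure_ne_top _ _), measure_univ, hGone i,
      ENNReal.ofReal_sub _ ha0.le, ENNReal.ofReal_one]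
  -- independence of f i and g i
  have hfg : ∀ i, IndepFun (f i) (g i) P := by
    intro i
    have := hindep.indepFun
      (show (Sum.inr (Sum.inl i) : Fin s ⊕ (Fin s ⊕ Fin s)) ≠ Sum.inr (Sum.inr i) by simp)
    exact this
  -- the diagonal
  set diag : Set (ℝ × ℝ) := {p : ℝ × ℝ | p.1 = p.2} with hdiag_def
  have hdiagm : MeasurableSet diag := measurableSet_eq_fun measurable_fst measurable_snd
  set pair : Fin s → Ω → ℝ × ℝ := fun i ω => (f i ω, g i ω) with hpair_def
  have hpairm : ∀ i, Measurable (pair i) := fun i => (hf i).prodMk (hg i)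
  have hEqset : ∀ i, pair i ⁻¹' diag
      = (f i ⁻¹' {1} ∩ g i ⁻¹' {1}) ∪ (f i ⁻¹' {1}ᶜ ∩ g i ⁻¹' {1}ᶜ) := by
    intro i
    ext ω
    rcases hf01 i ω with h1 | h1 <;> rcases hg01 i ω with h2 | h2 <;>
      simp [hpair_def, hdiag_def, h1, h2]
  have hNeset : ∀ i, pair i ⁻¹' diagᶜ
      = (f i ⁻¹' {1} ∩ g i ⁻¹' {1}ᶜ) ∪ (f i ⁻¹' {1}ᶜ ∩ g i ⁻¹' {1}) := by
    intro i
    ext ω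
    rcases hf01 i ω with h1 | h1 <;> rcases hg01 i ω with h2 | h2 <;>
      simp [hpair_def, hdiag_def, h1, h2]
  have hPEq : ∀ i, P (pair i ⁻¹' diag) = ENNReal.ofReal (a ^ 2 + (1 - a) ^ 2) := by
    intro i
    have hdisj : Disjoint (f i ⁻¹' {1} ∩ g i ⁻¹' {1}) (f i ⁻¹' {1}ᶜ ∩ g i ⁻¹' {1}ᶜ) :=
      Set.disjoint_left.mpr fun ω h1 h2 => h2.1 h1.1
    rw [hEqset i, measure_union hdisj
      (((measurableSet_singleton 1).compl.preimage (hf i)).inter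
      ((measurableSet_singleton 1).compl.preimage (hg i))),
      (hfg i).measure_inter_preimage_eq_mul _ _ (measurableSet_singleton 1)
      (measurableSet_singleton 1),
      (hfg i).measure_inter_preimage_eq_mul _ _ (measurableSet_singleton 1).compl
      (measurableSet_singleton 1).compl,
      hFone i, hGone i, hFzero i, hGzero i,
      ← ENNReal.ofReal_mul ha0.le, ← ENNReal.ofReal_mul ha1',
      ← ENNReal.ofReal_add (mul_nonneg ha0.le ha0.le) (mul_nonneg ha1' ha1')]
    congr 1; ring
  have hPNe : ∀ i, P (pair i ⁻¹' diagᶜ) = ENNReal.ofReal (2 * a * (1 - a)) := by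
    intro i
    have hdisj : Disjoint (f i ⁻¹' {1} ∩ g i ⁻¹' {1}ᶜ) (f i ⁻¹' {1}ᶜ ∩ g i ⁻¹' {1}) :=
      Set.disjoint_left.mpr fun ω h1 h2 => h2.1 h1.1
    rw [hNeset i, measure_union hdisj
      (((measurableSet_singleton 1).compl.preimage (hf i)).inter
      ((measurableSet_singleton 1).preimage (hg i))),
      (hfg i).measure_inter_preimage_eq_mul _ _ (measurableSet_singleton 1)
      (measurableSet_singleton 1).compl,
      (hfg i).measure_inter_preimage_eq_mul _ _ (measurableSet_singleton 1).compl
      (measurableSet_singleton 1),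
      hFone i, hGone i, hFzero i, hGzero i,
      ← ENNReal.ofReal_mul ha0.le, ← ENNReal.ofReal_mul ha1',
      ← ENNReal.ofReal_add (mul_nonneg ha0.le ha1') (mul_nonneg ha1' ha0.le)]
    congr 1; ring
  -- independence of pair i and r i
  have hmeas_all : ∀ j : Fin s ⊕ (Fin s ⊕ Fin s), Measurable (Sum.elim r (Sum.elim f g) j) := by
    rintro (j | j | j)
    · exact hr j
    · exact hf j
    · exact hg j
  have hpr : ∀ i, IndepFun (pair i) (r i) P := by
    intro i
    have := hindep.indepFun_prodMk hmeas_all (Sum.inr (Sum.inl i)) (Sum.inr (Sum.inr i))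
      (Sum.inl i) (by simp) (by simp)
    exact this
  -- nonnegativity bookkeeping
  have he1 : (0:ℝ) ≤ a ^ 2 + (1 - a) ^ 2 := by positivity
  have he2 : (0:ℝ) ≤ 2 * a * (1 - a) := by
    have := mul_nonneg ha0.le ha1'
    linarith
  -- the per-coordinate "bits differ" event
  set D : Fin s → Set Ω := fun i => {ω |
    dpbvBit t (r i ω) x₁ (f i ω) ≠ dpbvBit t (r i ω) x₂ (g i ω)} with hD_def
  have hD_eq : ∀ i, D i = (pair i ⁻¹' diag ∩ r i ⁻¹' S) ∪ (pair i ⁻¹' diagᶜ ∩ r i ⁻¹' Sᶜ) := by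
    intro i
    ext ω
    have hkey := dpbvBit_ne_iff t (r i ω) x₁ x₂ (f i ω) (g i ω) (hf01 i ω) (hg01 i ω)
    rw [Set.mem_symmDiff] at hkey
    simp only [hD_def, Set.mem_setOf_eq, Set.mem_union, Set.mem_inter_iff, Set.mem_preimage,
      Set.mem_compl_iff, hdiag_def, hpair_def, hS_def, Set.mem_symmDiff]
    rw [hkey]
    tauto
  have hDm : ∀ i, MeasurableSet (D i) := by
    intro i
    rw [hD_eq i]
    exact ((hdiagm.preimage (hpairm i)).inter (hSm.preimage (hr i))).union
      ((hdiagm.compl.preimage (hpairm i)).inter (hSm.compl.preimage (hr i)))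
  set v : ℝ := (a ^ 2 + (1 - a) ^ 2) * (2 * d / μ) + 2 * a * (1 - a) * (1 - 2 * d / μ) with hv_def
  have hPD : ∀ i, (P (D i)).toReal = v := by
    intro i
    have hdisj : Disjoint (pair i ⁻¹' diag ∩ r i ⁻¹' S) (pair i ⁻¹' diagᶜ ∩ r i ⁻¹' Sᶜ) :=
      Set.disjoint_left.mpr fun ω h1 h2 => h2.1 h1.1
    rw [hD_eq i, measure_union hdisj
      ((hdiagm.compl.preimage (hpairm i)).inter (hSm.compl.preimage (hr i))),
      (hpr i).measure_inter_preimage_eq_mul _ _ hdiagm hSm,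
      (hpr i).measure_inter_preimage_eq_mul _ _ hdiagm.compl hSm.compl,
      hPEq i, hPNe i, hA i, hAc i,
      ← ENNReal.ofReal_mul he1, ← ENNReal.ofReal_mul he2,
      ← ENNReal.ofReal_add (mul_nonneg he1 hpA0) (mul_nonneg he2 hpA1),
      ENNReal.toReal_ofReal (add_nonneg (mul_nonneg he1 hpA0) (mul_nonneg he2 hpA1))]
  -- Hamming distance as a sum of indicators
  have hHam : ∀ ω, (dpbvHammingDist t r f g x₁ x₂ ω : ℝ)
      = ∑ i : Fin s, (D i).indicator (fun _ => (1 : ℝ)) ω := by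
    intro ω
    rw [dpbvHammingDist, Finset.card_filter]
    push_cast
    refine Finset.sum_congr rfl fun i _ => ?_
    rw [Set.indicator_apply]
    simp only [hD_def, Set.mem_setOf_eq]
  have hint : ∀ i, Integrable ((D i).indicator (fun _ => (1 : ℝ))) P :=
    fun i => (integrable_const (1 : ℝ)).indicator (hDm i)
  have hHint : Integrable (fun ω => (dpbvHammingDist t r f g x₁ x₂ ω : ℝ)) P := by
    have heq : (fun ω => (dpbvHammingDist t r f g x₁ x₂ ω : ℝ))
        = fun ω => ∑ i : Fin s, (D i).indicator (fun _ => (1 : ℝ)) ω := funext hHam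
    rw [heq]
    exact integrable_finset_sum _ fun i _ => hint i
  have hHamInt : ∫ ω, (dpbvHammingDist t r f g x₁ x₂ ω : ℝ) ∂P = s * v := by
    simp_rw [hHam]
    rw [integral_finset_sum _ fun i _ => hint i]
    have hterm : ∀ i : Fin s, ∫ ω, (D i).indicator (fun _ => (1 : ℝ)) ω ∂P = v := by
      intro i
      rw [integral_indicator_const _ (hDm i), smul_eq_mul, mul_one, measureReal_def, hPD i]
    rw [Finset.sum_congr rfl fun i _ => hterm i, Finset.sum_const, Finset.card_univ,
      Fintype.card_fin, nsmul_eq_mul]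
  -- put it together
  have hsne : (s : ℝ) ≠ 0 := Nat.cast_ne_zero.mpr (by omega)
  have hInt : ∫ ω, dpbvEstimator t μ ε r f g x₁ x₂ ω ∂P
      = μ / (2 * s) * ((exp ε + 1) / (exp ε - 1)) ^ 2 * (s * v)
        - μ * exp ε / (exp ε - 1) ^ 2 := by
    unfold dpbvEstimator
    rw [integral_sub (hHint.const_mul _) (integrable_const _), integral_const_mul,
      integral_const, hHamInt, measureReal_def, measure_univ, ENNReal.toReal_one, one_smul]
  rw [hInt, hv_def, ha_def]
  have h1 : exp ε - 1 ≠ 0 := by linarith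
  have h2 : exp ε + 1 ≠ 0 := by linarith
  have h3 : μ ≠ 0 := ne_of_gt hμpos
  field_simp
  ring
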